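/- Let a, b, c, d be integers with ad − bc = ±1 and abcd ≠ 0, and suppose b is even. Let π be the group with presentation ⟨u, v, y | uyu⁻¹ = y⁻¹, v² = u^{2a} y^{b}, v u^{2c} y^{d} v⁻¹ = u^{−2c} y^{−d}⟩. Then the abelianization of π is isomorphic to ℤ/4|c|ℤ ⊕ ℤ/2ℤ ⊕ ℤ/2ℤ, and the images of u, v, y form a generating set whose images give a basis of H₁(π; 𝔽₂) ≅ (ℤ/2ℤ)³. -/

import Mathlib

/-- The relators of `π = ⟨u, v, y | uyu⁻¹ = y⁻¹, v² = u^{2a} y^{b},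
v u^{2c} y^{d} v⁻¹ = u^{−2c} y^{−d}⟩`, with generators `u = 0`, `v = 1`, `y = 2`. -/
def solRels (a b c d : ℤ) : Set (FreeGroup (Fin 3)) :=
  { FreeGroup.of 0 * FreeGroup.of 2 * (FreeGroup.of 0)⁻¹ * FreeGroup.of 2,
    ((FreeGroup.of 1) ^ 2)⁻¹ * (FreeGroup.of 0) ^ (2 * a) * (FreeGroup.of 2) ^ b,
    (FreeGroup.of 1 * ((FreeGroup.of 0) ^ (2 * c) * (FreeGroup.of 2) ^ d) *
        (FreeGroup.of 1)⁻¹) * ((FreeGroup.of 0) ^ (2 * c) * (FreeGroup.of 2) ^ d) }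

section Helpers

lemma mz2_sq (x : Multiplicative (ZMod 2)) : x * x = 1 := by
  have : x.toAdd + x.toAdd = 0 := by revert x; decide
  rw [← ofAdd_toAdd x, ← ofAdd_add, this, ofAdd_zero]

lemma mz2_zpow_even (x : Multiplicative (ZMod 2)) (t : ℤ) : x ^ (2 * t) = 1 := by
  have : x ^ (2 : ℤ) = 1 := by rw [zpow_two]; exact mz2_sq x
  rw [zpow_mul, this, one_zpow]

lemma mz2_zpow_even' (x : Multiplicative (ZMod 2)) {t : ℤ} (ht : Even t) : x ^ t = 1 := by
  obtain ⟨k, rfl⟩ := ht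
  rw [zpow_add]
  exact mz2_sq _

/-- All the relators die in any (2-torsion) abelian quotient mod 2. -/
lemma solRels_killed_mz2 (a b c d : ℤ) (hb : Even b) (f : Fin 3 → Multiplicative (ZMod 2)) :
    ∀ r ∈ solRels a b c d, FreeGroup.lift f r = 1 := by
  intro r hr
  rcases hr with rfl | rfl | rfl
  · simp only [map_mul, map_inv, FreeGroup.lift_apply_of]
    rw [mul_right_comm (f 0) (f 2), mul_inv_cancel, one_mul]
    exact mz2_sq _
  · simp only [map_mul, map_inv, map_zpow, map_pow, FreeGroup.lift_apply_of]
    rw [pow_two, mz2_sq, inv_one, one_mul, mz2_zpow_even, one_mul, mz2_zpow_even' _ hb]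
  · simp only [map_mul, map_inv, map_zpow, FreeGroup.lift_apply_of]
    rw [mz2_zpow_even, one_mul, mul_right_comm (f 1) ((f 2) ^ d), mul_inv_cancel, one_mul,
      ← zpow_add]
    exact mz2_zpow_even' _ ⟨d, by ring⟩

lemma zmod2_intCast_even {t : ℤ} (ht : Even t) : ((t : ℤ) : ZMod 2) = 0 := by
  obtain ⟨k, rfl⟩ := ht
  rw [← two_mul, Int.cast_mul, show ((2 : ℤ) : ZMod 2) = 0 from by decide, zero_mul]

lemma zmodn_4c (c : ℤ) : ((4 * c : ℤ) : ZMod (4 * c.natAbs)) = 0 := by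
  rw [ZMod.intCast_zmod_eq_zero_iff_dvd]
  push_cast
  exact mul_dvd_mul_left 4 ((abs_dvd _ _).mpr dvd_rfl)

lemma mprod_zpow {n : ℕ} (x : ZMod n) (y z : ZMod 2) (t : ℤ) :
    (Multiplicative.ofAdd (x, y, z)) ^ t =
      Multiplicative.ofAdd ((t : ZMod n) * x, (t : ZMod 2) * y, (t : ZMod 2) * z) := by
  rw [← ofAdd_zsmul]
  congr 1
  rw [Prod.smul_def, Prod.smul_def]
  simp [zsmul_eq_mul]

lemma mprod_mul {n : ℕ} (x x' : ZMod n) (y y' z z' : ZMod 2) :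
    (Multiplicative.ofAdd (x, y, z)) * (Multiplicative.ofAdd (x', y', z')) =
      Multiplicative.ofAdd (x + x', y + y', z + z') := rfl

lemma prod_hom_ext {n : ℕ} {H : Type*} [Group H]
    {F1 F2 : Multiplicative (ZMod n × ZMod 2 × ZMod 2) →* H}
    (h1 : F1 (Multiplicative.ofAdd (1, 0, 0)) = F2 (Multiplicative.ofAdd (1, 0, 0)))
    (h2 : F1 (Multiplicative.ofAdd (0, 1, 0)) = F2 (Multiplicative.ofAdd (0, 1, 0)))
    (h3 : F1 (Multiplicative.ofAdd (0, 0, 1)) = F2 (Multiplicative.ofAdd (0, 0, 1))) :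
    F1 = F2 := by
  have key : ∀ (i j k : ℤ),
      (Multiplicative.ofAdd ((i : ZMod n), (j : ZMod 2), (k : ZMod 2))) =
        (Multiplicative.ofAdd ((1 : ZMod n), (0 : ZMod 2), (0 : ZMod 2))) ^ i *
        (Multiplicative.ofAdd ((0 : ZMod n), (1 : ZMod 2), (0 : ZMod 2))) ^ j *
        (Multiplicative.ofAdd ((0 : ZMod n), (0 : ZMod 2), (1 : ZMod 2))) ^ k := by
    intro i j k
    rw [← ofAdd_zsmul, ← ofAdd_zsmul, ← ofAdd_zsmul, ← ofAdd_add, ← ofAdd_add]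
    congr 1
    simp [Prod.ext_iff, zsmul_eq_mul]
  refine MonoidHom.ext fun x => ?_
  obtain ⟨i, hi⟩ := ZMod.intCast_surjective x.toAdd.1
  obtain ⟨j, hj⟩ := ZMod.intCast_surjective x.toAdd.2.1
  obtain ⟨k, hk⟩ := ZMod.intCast_surjective x.toAdd.2.2
  have hx : x = Multiplicative.ofAdd ((i : ZMod n), (j : ZMod 2), (k : ZMod 2)) := by
    rw [hi, hj, hk]; exact (ofAdd_toAdd x).symm
  rw [hx, key, map_mul, map_mul, map_zpow, map_zpow, map_zpow,
    map_mul, map_mul, map_zpow, map_zpow, map_zpow, h1, h2, h3]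

/-- Build the homomorphism from `ZMod n × ZMod 2 × ZMod 2` into a commutative group
given target elements of the right orders. -/
lemma exists_hom_from_prod (n : ℕ) {A : Type*} [CommGroup A] (x1 x2 x3 : A)
    (h1 : x1 ^ ((n : ℕ) : ℤ) = 1) (h2 : x2 ^ ((2 : ℕ) : ℤ) = 1) (h3 : x3 ^ ((2 : ℕ) : ℤ) = 1) :
    ∃ g : Multiplicative (ZMod n × ZMod 2 × ZMod 2) →* A,
      ∀ i j k : ℤ, g (Multiplicative.ofAdd ((i : ZMod n), (j : ZMod 2), (k : ZMod 2))) =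
        x1 ^ i * x2 ^ j * x3 ^ k := by
  have c1 : (zmultiplesHom (Additive A) (Additive.ofMul x1)) ((n : ℕ) : ℤ) = 0 := by
    rw [zmultiplesHom_apply, ← ofMul_zpow, h1]; rfl
  have c2 : (zmultiplesHom (Additive A) (Additive.ofMul x2)) ((2 : ℕ) : ℤ) = 0 := by
    rw [zmultiplesHom_apply, ← ofMul_zpow, h2]; rfl
  have c3 : (zmultiplesHom (Additive A) (Additive.ofMul x3)) ((2 : ℕ) : ℤ) = 0 := by
    rw [zmultiplesHom_apply, ← ofMul_zpow, h3]; rfl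
  set l1 : ZMod n →+ Additive A := ZMod.lift n ⟨_, c1⟩ with hl1
  set l2 : ZMod 2 →+ Additive A := ZMod.lift 2 ⟨_, c2⟩ with hl2
  set l3 : ZMod 2 →+ Additive A := ZMod.lift 2 ⟨_, c3⟩ with hl3
  set L : (ZMod n × ZMod 2 × ZMod 2) →+ Additive A :=
    l1.comp (AddMonoidHom.fst _ _) +
      l2.comp ((AddMonoidHom.fst _ _).comp (AddMonoidHom.snd _ _)) +
      l3.comp ((AddMonoidHom.snd _ _).comp (AddMonoidHom.snd _ _)) with hL
  refine ⟨AddMonoidHom.toMultiplicativeLeft L, fun i j k => ?_⟩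
  have : L ((i : ZMod n), (j : ZMod 2), (k : ZMod 2)) =
      Additive.ofMul (x1 ^ i * x2 ^ j * x3 ^ k) := by
    rw [hL]
    simp only [AddMonoidHom.add_apply, AddMonoidHom.coe_comp, Function.comp_apply,
      AddMonoidHom.coe_fst, AddMonoidHom.coe_snd, hl1, hl2, hl3, ZMod.lift_coe]
    rw [zmultiplesHom_apply, zmultiplesHom_apply, zmultiplesHom_apply,
      ← ofMul_zpow, ← ofMul_zpow, ← ofMul_zpow, ← ofMul_mul, ← ofMul_mul]
  show Additive.toMul (L (Multiplicative.toAdd (Multiplicative.ofAdd _))) = _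
  rw [toAdd_ofAdd, this]; rfl

lemma mprod_inv {n : ℕ} (x : ZMod n) (y z : ZMod 2) :
    (Multiplicative.ofAdd (x, y, z))⁻¹ = Multiplicative.ofAdd (-x, -y, -z) := rfl

lemma main_rels_killed (a b c d : ℤ) (hb : Even b) :
    ∀ r ∈ solRels a b c d,
      FreeGroup.lift
        (![Multiplicative.ofAdd ((1 : ZMod (4 * c.natAbs)), (0 : ZMod 2), (0 : ZMod 2)),
           Multiplicative.ofAdd ((a : ZMod (4 * c.natAbs)), (1 : ZMod 2), (0 : ZMod 2)),
           Multiplicative.ofAdd ((0 : ZMod (4 * c.natAbs)), (0 : ZMod 2), (1 : ZMod 2))]) r = 1 := by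
  intro r hr
  rcases hr with rfl | rfl | rfl <;>
    simp only [map_mul, map_inv, map_zpow, map_pow, FreeGroup.lift_apply_of,
      Matrix.cons_val_zero, Matrix.cons_val_one, Matrix.head_cons, Matrix.cons_val_two,
      Matrix.tail_cons]
  · rw [mprod_inv, mprod_mul, mprod_mul, mprod_mul, ofAdd_eq_one]
    simp only [Prod.ext_iff, Prod.fst_zero, Prod.snd_zero]
    refine ⟨by ring, by ring, by decide⟩
  · rw [pow_two, mprod_mul, mprod_inv, mprod_zpow, mprod_zpow, mprod_mul, mprod_mul,
      ofAdd_eq_one]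
    simp only [Prod.ext_iff, Prod.fst_zero, Prod.snd_zero]
    refine ⟨by push_cast; ring, by simp only [mul_zero, add_zero]; decide, ?_⟩
    simp only [mul_zero, mul_one, neg_zero, zero_add, add_zero]
    exact zmod2_intCast_even hb
  · rw [mprod_zpow, mprod_zpow, mprod_inv, mprod_mul, mprod_mul, mprod_mul, mprod_mul,
      ofAdd_eq_one]
    simp only [Prod.ext_iff, Prod.fst_zero, Prod.snd_zero]
    refine ⟨?_, by ring, ?_⟩
    · push_cast
      have := zmodn_4c c
      push_cast at this
      linear_combination this
    · simp only [mul_zero, mul_one, neg_zero, add_zero, zero_add]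
      rw [← two_mul, show (2 : ZMod 2) = 0 from by decide, zero_mul]

end Helpers

/-- for `ad − bc = ±1`, `abcd ≠ 0` and `b` even, the abelianization of
`π = ⟨u, v, y | uyu⁻¹ = y⁻¹, v² = u^{2a}y^{b}, vu^{2c}y^{d}v⁻¹ = u^{−2c}y^{−d}⟩`
is `ℤ/4|c|ℤ ⊕ ℤ/2ℤ ⊕ ℤ/2ℤ`, and the images of `u, v, y` give a basis of
`H₁(π; 𝔽₂) ≅ (ℤ/2ℤ)³` (expressed by the existence of the dual homomorphisms
`φu, φv, φy : π → ℤ/2ℤ`). -/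
theorem stmt18 (a b c d : ℤ)
    (hdet : a * d - b * c = 1 ∨ a * d - b * c = -1)
    (h0 : a * b * c * d ≠ 0) (hb : Even b) :
    Nonempty (Abelianization (PresentedGroup (solRels a b c d)) ≃*
        Multiplicative (ZMod (4 * c.natAbs) × ZMod 2 × ZMod 2)) ∧
    ∃ φu φv φy : PresentedGroup (solRels a b c d) →* Multiplicative (ZMod 2),
      (φu (PresentedGroup.of 0) = Multiplicative.ofAdd 1 ∧
        φu (PresentedGroup.of 1) = Multiplicative.ofAdd 0 ∧
        φu (PresentedGroup.of 2) = Multiplicative.ofAdd 0) ∧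
      (φv (PresentedGroup.of 0) = Multiplicative.ofAdd 0 ∧
        φv (PresentedGroup.of 1) = Multiplicative.ofAdd 1 ∧
        φv (PresentedGroup.of 2) = Multiplicative.ofAdd 0) ∧
      (φy (PresentedGroup.of 0) = Multiplicative.ofAdd 0 ∧
        φy (PresentedGroup.of 1) = Multiplicative.ofAdd 0 ∧
        φy (PresentedGroup.of 2) = Multiplicative.ofAdd 1) := by
  constructor
  · -- Part 1: the abelianization
    have hP : ∀ r ∈ solRels a b c d, PresentedGroup.mk (solRels a b c d) r = 1 :=
      fun r hr => (QuotientGroup.eq_one_iff _).mpr (Subgroup.subset_normalClosure hr)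
    have h1 := congrArg (Abelianization.of
      (G := PresentedGroup (solRels a b c d))) (hP _ (Set.mem_insert _ _))
    have h2 := congrArg (Abelianization.of
      (G := PresentedGroup (solRels a b c d)))
      (hP _ (Set.mem_insert_of_mem _ (Set.mem_insert _ _)))
    have h3 := congrArg (Abelianization.of
      (G := PresentedGroup (solRels a b c d)))
      (hP _ (Set.mem_insert_of_mem _ (Set.mem_insert_of_mem _ rfl)))
    simp only [map_mul, map_inv, map_zpow, map_pow, map_one] at h1 h2 h3
    set U : Abelianization (PresentedGroup (solRels a b c d)) :=
      Abelianization.of (PresentedGroup.mk (solRels a b c d) (FreeGroup.of 0)) with hUdef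
    set V : Abelianization (PresentedGroup (solRels a b c d)) :=
      Abelianization.of (PresentedGroup.mk (solRels a b c d) (FreeGroup.of 1)) with hVdef
    set Y : Abelianization (PresentedGroup (solRels a b c d)) :=
      Abelianization.of (PresentedGroup.mk (solRels a b c d) (FreeGroup.of 2)) with hYdef
    -- derived relations
    rw [mul_right_comm U Y U⁻¹, mul_inv_cancel, one_mul] at h1
    have hY2 : Y ^ (2 : ℤ) = 1 := by rw [zpow_two]; exact h1
    have hYeven : ∀ t : ℤ, Even t → Y ^ t = 1 := by
      intro t ht
      obtain ⟨k, rfl⟩ := ht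
      rw [← two_mul, zpow_mul, hY2, one_zpow]
    have hV2 : V * V = U ^ (2 * a : ℤ) := by
      rw [hYeven b hb, mul_one, inv_mul_eq_one] at h2
      rw [← pow_two]
      exact h2
    have hU4c : U ^ (4 * c : ℤ) = 1 := by
      rw [mul_right_comm V (U ^ (2*c : ℤ) * Y ^ d) V⁻¹, mul_inv_cancel, one_mul,
        mul_mul_mul_comm, ← zpow_add, ← zpow_add, hYeven (d + d) ⟨d, rfl⟩, mul_one] at h3
      rw [show (4 * c : ℤ) = 2 * c + (2 * c) from by ring]
      exact h3
    have hUn : U ^ ((4 * c.natAbs : ℕ) : ℤ) = 1 := by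
      have hcast : ((4 * c.natAbs : ℕ) : ℤ) = 4 * |c| := by push_cast; ring
      rcases abs_choice c with h | h
      · rw [hcast, h, hU4c]
      · rw [hcast, h, show (4 * -c : ℤ) = -(4 * c) from by ring, zpow_neg, hU4c, inv_one]
    have hW2 : (V * U ^ (-a : ℤ)) ^ ((2 : ℕ) : ℤ) = 1 := by
      rw [show ((2 : ℕ) : ℤ) = (2 : ℤ) from rfl, zpow_two, mul_mul_mul_comm, hV2,
        ← zpow_add, ← zpow_add, show (2 * a + (-a + -a) : ℤ) = 0 from by ring, zpow_zero]
    have hY2' : Y ^ ((2 : ℕ) : ℤ) = 1 := by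
      rw [show ((2 : ℕ) : ℤ) = (2 : ℤ) from rfl]; exact hY2
    obtain ⟨g, hg⟩ := exists_hom_from_prod (4 * c.natAbs) U (V * U ^ (-a : ℤ)) Y hUn hW2 hY2'
    -- the forward map
    have hF := main_rels_killed a b c d hb
    set F : PresentedGroup (solRels a b c d) →*
        Multiplicative (ZMod (4 * c.natAbs) × ZMod 2 × ZMod 2) :=
      PresentedGroup.toGroup hF with hFdef
    set F' := Abelianization.lift F with hF'def
    have hF0 : F (PresentedGroup.mk (solRels a b c d) (FreeGroup.of 0)) =
        Multiplicative.ofAdd ((1 : ZMod (4 * c.natAbs)), (0 : ZMod 2), (0 : ZMod 2)) := by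
      have h := PresentedGroup.toGroup.of hF (x := 0)
      simp only [Matrix.cons_val_zero] at h
      exact h
    have hF1 : F (PresentedGroup.mk (solRels a b c d) (FreeGroup.of 1)) =
        Multiplicative.ofAdd ((a : ZMod (4 * c.natAbs)), (1 : ZMod 2), (0 : ZMod 2)) := by
      have h := PresentedGroup.toGroup.of hF (x := 1)
      simp only [Matrix.cons_val_one, Matrix.head_cons] at h
      exact h
    have hF2 : F (PresentedGroup.mk (solRels a b c d) (FreeGroup.of 2)) =
        Multiplicative.ofAdd ((0 : ZMod (4 * c.natAbs)), (0 : ZMod 2), (1 : ZMod 2)) := by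
      have h := PresentedGroup.toGroup.of hF (x := 2)
      simp only [Matrix.cons_val_two, Matrix.tail_cons, Matrix.head_cons] at h
      exact h
    have hg100 : g (Multiplicative.ofAdd ((1 : ZMod (4 * c.natAbs)), (0 : ZMod 2), (0 : ZMod 2)))
        = U := by simpa using hg 1 0 0
    have hg010 : g (Multiplicative.ofAdd ((0 : ZMod (4 * c.natAbs)), (1 : ZMod 2), (0 : ZMod 2)))
        = V * U ^ (-a : ℤ) := by simpa using hg 0 1 0
    have hg001 : g (Multiplicative.ofAdd ((0 : ZMod (4 * c.natAbs)), (0 : ZMod 2), (1 : ZMod 2)))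
        = Y := by simpa using hg 0 0 1
    have hgF1 : g (F (PresentedGroup.mk (solRels a b c d) (FreeGroup.of 1))) = V := by
      rw [hF1, show ((a : ZMod (4 * c.natAbs)), (1 : ZMod 2), (0 : ZMod 2)) =
        (((a : ℤ) : ZMod (4 * c.natAbs)), ((1 : ℤ) : ZMod 2), ((0 : ℤ) : ZMod 2)) from by
          push_cast; rfl, hg a 1 0, zpow_one, zpow_zero, mul_one, mul_comm (U ^ (a : ℤ)),
        mul_assoc, ← zpow_add, show (-a + a : ℤ) = 0 from by ring, zpow_zero, mul_one]
    have comp1 : g.comp F' = MonoidHom.id _ := by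
      apply Abelianization.hom_ext
      apply PresentedGroup.ext
      intro x
      fin_cases x
      · show g (F' U) = U
        rw [hUdef, hF'def, Abelianization.lift_apply_of, hF0, hg100]
      · show g (F' V) = V
        rw [hVdef, hF'def, Abelianization.lift_apply_of]
        exact hgF1
      · show g (F' Y) = Y
        rw [hYdef, hF'def, Abelianization.lift_apply_of, hF2, hg001]
    have comp2 : F'.comp g = MonoidHom.id _ := by
      apply prod_hom_ext
      · rw [MonoidHom.comp_apply, hg100, MonoidHom.id_apply, hUdef, hF'def,
          Abelianization.lift_apply_of, hF0]
      · rw [MonoidHom.comp_apply, hg010, MonoidHom.id_apply, map_mul, map_zpow, hVdef, hUdef,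
          hF'def, Abelianization.lift_apply_of, Abelianization.lift_apply_of, hF0, hF1, mprod_zpow]
        rw [mprod_mul]
        congr 1
        refine Prod.ext ?_ (Prod.ext ?_ ?_) <;> push_cast <;> ring
      · rw [MonoidHom.comp_apply, hg001, MonoidHom.id_apply, hYdef, hF'def,
          Abelianization.lift_apply_of, hF2]
    exact ⟨MonoidHom.toMulEquiv F' g comp1 comp2⟩
  · -- Part 2: the mod-2 characters
    refine ⟨PresentedGroup.toGroup (solRels_killed_mz2 a b c d hb
        ![Multiplicative.ofAdd 1, 1, 1]),
      PresentedGroup.toGroup (solRels_killed_mz2 a b c d hb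
        ![1, Multiplicative.ofAdd 1, 1]),
      PresentedGroup.toGroup (solRels_killed_mz2 a b c d hb
        ![1, 1, Multiplicative.ofAdd 1]), ?_, ?_, ?_⟩ <;>
    refine ⟨?_, ?_, ?_⟩ <;>
    simp [PresentedGroup.toGroup.of]
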